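/- For any n ≥ 2: χ_ℓ(K_n □ K_{1,s}) = n if s < n!, and χ_ℓ(K_n □ K_{1,s}) = n + 1 if s ≥ n!. -/

import Mathlib

open SimpleGraph Finset

section ListColoringDefs

variable {V : Type*}

/-- `f` is a proper coloring of `G` choosing each color from the list `L v`. -/
def IsProperListColoring (G : SimpleGraph V) (L : V → Finset ℕ) (f : V → ℕ) : Prop :=
  (∀ v, f v ∈ L v) ∧ ∀ u v, G.Adj u v → f u ≠ f v

/-- `G` admits a proper coloring from the list assignment `L`. -/
def ListColorable (G : SimpleGraph V) (L : V → Finset ℕ) : Prop :=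
  ∃ f, IsProperListColoring G L f

/-- `G` is colorable from every list assignment with lists of size at least `m`. -/
def Choosable (G : SimpleGraph V) (m : ℕ) : Prop :=
  ∀ L : V → Finset ℕ, (∀ v, m ≤ (L v).card) → ListColorable G L

/-- The list chromatic number of `G`. -/
noncomputable def listChromaticNumber (G : SimpleGraph V) : ℕ :=
  sInf { m | Choosable G m }

/-- `G` is strong `k`-chromatic-choosable: `χ(G) = k` and every `(k-1)`-assignment
from which `G` is not colorable is constant. -/
def StrongCC (G : SimpleGraph V) (k : ℕ) : Prop :=
  G.chromaticNumber = (k : ℕ∞) ∧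
    ∀ L : V → Finset ℕ, (∀ v, (L v).card = k - 1) → ¬ ListColorable G L →
      ∀ u v : V, L u = L v

/-- The number of proper `L`-colorings of `G`. -/
noncomputable def numColorings (G : SimpleGraph V) (L : V → Finset ℕ) : ℕ :=
  Set.ncard { f : V → ℕ | IsProperListColoring G L f }

/-- The list color function `P_ℓ(G,k)`: the minimum number of proper `L`-colorings
over all `k`-assignments `L`. -/
noncomputable def listColorFunction (G : SimpleGraph V) (k : ℕ) : ℕ :=
  sInf { n | ∃ L : V → Finset ℕ, (∀ v, (L v).card = k) ∧ n = numColorings G L }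

/-- The chromatic polynomial `P(G,k)`: the number of proper colorings with colors
from `{0, …, k-1}`. -/
noncomputable def chromPoly (G : SimpleGraph V) (k : ℕ) : ℕ :=
  numColorings G (fun _ => Finset.range k)

/-- The join `G ∨ K_p` of `G` with the complete graph on `p` vertices. -/
def joinK (G : SimpleGraph V) (p : ℕ) : SimpleGraph (V ⊕ Fin p) :=
  SimpleGraph.fromRel (fun a b =>
    match a, b with
    | Sum.inl u, Sum.inl v => G.Adj u v
    | _, _ => True)

/-- The star `K_{1,s}`: center `none` adjacent to the `s` leaves. -/
def starGraph (s : ℕ) : SimpleGraph (Option (Fin s)) :=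
  SimpleGraph.fromRel (fun a _ => a = none)

/-- The cycle graph `C_n` on `Fin n` (for `n ≥ 3`). -/
def cycGraph (n : ℕ) : SimpleGraph (Fin n) :=
  SimpleGraph.fromRel (fun a b => b.val = (a.val + 1) % n)

end ListColoringDefs

section Helpers

open Function

/-- Hall's theorem wrapper: pointwise bounds plus a global union bound give an SDR. -/
lemma hall_wrap {n : ℕ} (hn : 1 ≤ n) (t : Fin n → Finset ℕ)
    (h1 : ∀ v, n - 1 ≤ (t v).card) (h2 : n ≤ (Finset.univ.biUnion t).card) :
    ∃ f : Fin n → ℕ, Function.Injective f ∧ ∀ v, f v ∈ t v := by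
  rw [← Finset.all_card_le_biUnion_card_iff_exists_injective]
  intro w
  rcases eq_or_ne w Finset.univ with rfl | hne
  · simpa [Finset.card_univ] using h2
  rcases Finset.eq_empty_or_nonempty w with rfl | ⟨v, hv⟩
  · simp
  have hlt : w.card < n := by
    have := Finset.card_lt_card (Finset.ssubset_univ_iff.mpr hne)
    simpa [Finset.card_univ] using this
  calc w.card ≤ n - 1 := by omega
    _ ≤ (t v).card := h1 v
    _ ≤ (w.biUnion t).card := Finset.card_le_card (Finset.subset_biUnion_of_mem t hv)

/-- Counting lemma: at least `m.descFactorial t` injective choices from lists of size `≥ m`. -/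
lemma count_inj : ∀ (t m : ℕ), t ≤ m → ∀ L : Fin t → Finset ℕ, (∀ v, m ≤ (L v).card) →
    m.descFactorial t ≤ ((Fintype.piFinset L).filter (fun g => Function.Injective g)).card := by
  intro t
  induction t with
  | zero =>
    intro m _ L _
    rw [Nat.descFactorial_zero]
    refine Nat.one_le_iff_ne_zero.mpr (Finset.card_ne_zero_of_mem (a := finZeroElim) ?_)
    simp only [Finset.mem_filter, Fintype.mem_piFinset]
    exact ⟨fun i => i.elim0, fun i => i.elim0⟩
  | succ t ih =>
    intro m hm L hL
    have ih' := ih m (Nat.le_of_succ_le hm) (fun i : Fin t => L i.castSucc) (fun v => hL _)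
    set S := (Fintype.piFinset (fun i : Fin t => L i.castSucc)).filter
      (fun g => Function.Injective g) with hS
    set B := S.biUnion (fun g => ((L (Fin.last t)) \ (Finset.univ.image g)).image
      (fun c => (Fin.snoc g c : Fin (t+1) → ℕ))) with hB
    have hBsub : B ⊆ (Fintype.piFinset L).filter (fun g => Function.Injective g) := by
      intro x hx
      simp only [hB, Finset.mem_biUnion, Finset.mem_image, hS, Finset.mem_filter,
        Fintype.mem_piFinset, Finset.mem_sdiff] at hx
      obtain ⟨g, ⟨hmem, hinj⟩, c, ⟨hc1, hc2⟩, rfl⟩ := hx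
      have hni : ∀ i : Fin t, c ≠ g i := by
        intro i h
        exact hc2 ⟨i, Finset.mem_univ i, h.symm⟩
      refine Finset.mem_filter.mpr ⟨Fintype.mem_piFinset.mpr ?_, ?_⟩
      · intro i
        refine Fin.lastCases ?_ ?_ i
        · rwa [Fin.snoc_last]
        · intro j; rw [Fin.snoc_castSucc]; exact hmem j
      · intro i j hij
        induction i using Fin.lastCases with
        | last =>
          induction j using Fin.lastCases with
          | last => rfl
          | cast k =>
            rw [Fin.snoc_last, Fin.snoc_castSucc] at hij
            exact absurd hij (hni k)
        | cast k =>
          induction j using Fin.lastCases with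
          | last =>
            rw [Fin.snoc_last, Fin.snoc_castSucc] at hij
            exact absurd hij.symm (hni k)
          | cast l =>
            rw [Fin.snoc_castSucc, Fin.snoc_castSucc] at hij
            exact congrArg Fin.castSucc (hinj hij)
    have hdisj : ∀ g₁ ∈ S, ∀ g₂ ∈ S, g₁ ≠ g₂ →
        Disjoint (((L (Fin.last t)) \ (Finset.univ.image g₁)).image
            (fun c => (Fin.snoc g₁ c : Fin (t+1) → ℕ)))
          (((L (Fin.last t)) \ (Finset.univ.image g₂)).image
            (fun c => (Fin.snoc g₂ c : Fin (t+1) → ℕ))) := by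
      intro g₁ _ g₂ _ hne
      rw [Finset.disjoint_left]
      rintro x hx1 hx2
      simp only [Finset.mem_image] at hx1 hx2
      obtain ⟨c1, _, rfl⟩ := hx1
      obtain ⟨c2, _, h2⟩ := hx2
      apply hne
      have := congrArg Fin.init h2
      rw [Fin.init_snoc, Fin.init_snoc] at this
      exact this.symm
    have hcard : B.card = ∑ g ∈ S, ((L (Fin.last t)) \ (Finset.univ.image g)).card := by
      rw [hB, Finset.card_biUnion hdisj]
      refine Finset.sum_congr rfl (fun g _ => ?_)
      apply Finset.card_image_of_injective
      intro c1 c2 h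
      have := congrArg (fun f => f (Fin.last t)) h
      simpa using this
    have hlow : ∀ g : Fin t → ℕ, m - t ≤ ((L (Fin.last t)) \ (Finset.univ.image g)).card := by
      intro g
      calc m - t ≤ (L (Fin.last t)).card - (Finset.univ.image g).card := by
            have h1 : (Finset.univ.image g).card ≤ t := by
              simpa using Finset.card_image_le (s := (Finset.univ : Finset (Fin t))) (f := g)
            have := hL (Fin.last t)
            omega
        _ ≤ _ := Finset.le_card_sdiff _ _
    calc m.descFactorial (t + 1) = (m - t) * m.descFactorial t := Nat.descFactorial_succ m t
      _ ≤ (m - t) * S.card := Nat.mul_le_mul_left _ ih'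
      _ = ∑ _g ∈ S, (m - t) := by rw [Finset.sum_const, smul_eq_mul, mul_comm]
      _ ≤ ∑ g ∈ S, ((L (Fin.last t)) \ (Finset.univ.image g)).card :=
          Finset.sum_le_sum (fun g _ => hlow g)
      _ = B.card := hcard.symm
      _ ≤ _ := Finset.card_le_card hBsub

/-- At most one injective coloring can violate the union condition for a given column. -/
lemma bad_unique {n : ℕ} (hn : 2 ≤ n) (Lc : Fin n → Finset ℕ) (hLc : ∀ v, n ≤ (Lc v).card)
    (f g : Fin n → ℕ) (hf : Function.Injective f) (_hg : Function.Injective g)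
    (hbf : (Finset.univ.biUnion fun v => Lc v \ {f v}).card < n)
    (hbg : (Finset.univ.biUnion fun v => Lc v \ {g v}).card < n) : f = g := by
  set Uf := Finset.univ.biUnion fun v => Lc v \ {f v} with hUf
  set Ug := Finset.univ.biUnion fun v => Lc v \ {g v} with hUg
  have key : ∀ (h : Fin n → ℕ) (U : Finset ℕ),
      (U = Finset.univ.biUnion fun v => Lc v \ {h v}) → U.card < n →
      ∀ v, Lc v \ {h v} = U ∧ h v ∉ U ∧ Lc v = insert (h v) U := by
    intro h U hU hcard v
    have hsub : Lc v \ {h v} ⊆ U := by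
      rw [hU]
      exact Finset.subset_biUnion_of_mem (fun v => Lc v \ {h v}) (Finset.mem_univ v)
    have hc1 : n - 1 ≤ (Lc v \ {h v}).card := by
      have := Finset.le_card_sdiff ({h v} : Finset ℕ) (Lc v)
      have := hLc v
      simp only [Finset.card_singleton] at *
      omega
    have heq : Lc v \ {h v} = U := by
      apply Finset.eq_of_subset_of_card_le hsub
      have := Finset.card_le_card hsub
      omega
    have hmem : h v ∈ Lc v := by
      by_contra hmem
      have : Lc v \ {h v} = Lc v := by
        apply Finset.sdiff_eq_self_of_disjoint
        simpa using hmem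
      rw [this] at heq
      have := hLc v
      rw [heq] at this
      omega
    have hnotin : h v ∉ U := by
      rw [← heq]
      simp
    refine ⟨heq, hnotin, ?_⟩
    rw [← heq, Finset.sdiff_singleton_eq_erase, Finset.insert_erase hmem]
  have keyf := key f Uf hUf hbf
  have keyg := key g Ug hUg hbg
  by_cases hU : Uf = Ug
  · funext v
    have h1 := (keyf v).1
    have h2 := (keyg v).1
    rw [hU, ← h2] at h1
    by_contra hne
    have hfv : f v ∈ Lc v := by
      rw [(keyf v).2.2]; exact Finset.mem_insert_self _ _
    have : f v ∈ Lc v \ {g v} := Finset.mem_sdiff.mpr ⟨hfv, by simpa using hne⟩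
    rw [← h1] at this
    simp at this
  · exfalso
    have hfg : ∀ u, f u ≠ g u := by
      intro u h
      apply hU
      rw [← (keyf u).1, ← (keyg u).1, h]
    have hfUg : ∀ u, f u ∈ Ug := by
      intro u
      rw [← (keyg u).1]
      refine Finset.mem_sdiff.mpr ⟨?_, by simpa using hfg u⟩
      rw [(keyf u).2.2]; exact Finset.mem_insert_self _ _
    set v : Fin n := ⟨0, by omega⟩
    set w : Fin n := ⟨1, by omega⟩
    have hvw : v ≠ w := by simp [v, w, Fin.ext_iff]
    have h1 : f v ∈ Lc w := by
      have := hfUg v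
      rw [← (keyg w).1] at this
      exact (Finset.mem_sdiff.mp this).1
    rw [(keyf w).2.2] at h1
    rcases Finset.mem_insert.mp h1 with h | h
    · exact hvw (hf h)
    · exact (keyf v).2.1 h

/-- Every column of a proper coloring of `K_n □ K_{1,s}` is injective. -/
lemma column_inj {n s : ℕ} {L : Fin n × Option (Fin s) → Finset ℕ}
    {F : Fin n × Option (Fin s) → ℕ}
    (h : IsProperListColoring ((⊤ : SimpleGraph (Fin n)).boxProd (_root_.starGraph s)) L F)
    (c : Option (Fin s)) : Function.Injective (fun v : Fin n => F (v, c)) := by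
  intro v w hvw
  by_contra hne
  exact h.2 (v, c) (w, c)
    (SimpleGraph.boxProd_adj.mpr (Or.inl ⟨(SimpleGraph.top_adj v w).mpr hne, rfl⟩)) hvw

/-- Extension lemma: a good center coloring extends to the whole graph. -/
lemma colorable_of_good {n s : ℕ} (hn : 2 ≤ n)
    (L : Fin n × Option (Fin s) → Finset ℕ) (hL : ∀ v, n ≤ (L v).card)
    (f : Fin n → ℕ) (hfi : Function.Injective f) (hfm : ∀ v, f v ∈ L (v, none))
    (hgood : ∀ j : Fin s, n ≤ ((Finset.univ.biUnion fun v => L (v, some j) \ {f v})).card) :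
    ListColorable ((⊤ : SimpleGraph (Fin n)).boxProd (_root_.starGraph s)) L := by
  have hcol : ∀ j : Fin s, ∃ g : Fin n → ℕ, Function.Injective g ∧
      ∀ v, g v ∈ L (v, some j) \ {f v} := by
    intro j
    apply hall_wrap (by omega) _ _ (hgood j)
    intro v
    have := Finset.le_card_sdiff ({f v} : Finset ℕ) (L (v, some j))
    have := hL (v, some j)
    simp only [Finset.card_singleton] at *
    omega
  choose g hgi hgm using hcol
  refine ⟨fun p => Option.rec (f p.1) (fun j => g j p.1) p.2, ?_, ?_⟩
  · rintro ⟨a, _ | j⟩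
    · exact hfm a
    · exact (Finset.mem_sdiff.mp (hgm j a)).1
  · rintro ⟨a, b⟩ ⟨c, d⟩ hadj
    rw [SimpleGraph.boxProd_adj] at hadj
    rcases hadj with ⟨hac, rfl⟩ | ⟨hbd, rfl⟩
    · rw [SimpleGraph.top_adj] at hac
      cases b with
      | none => exact fun h => hac (hfi h)
      | some j => exact fun h => hac (hgi j h)
    · rw [show _root_.starGraph s = SimpleGraph.fromRel (fun a _ => a = none) from rfl,
        SimpleGraph.fromRel_adj] at hbd
      obtain ⟨hne, h⟩ := hbd
      rcases h with rfl | rfl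
      · cases d with
        | none => exact absurd rfl hne
        | some j =>
          intro h
          have := (Finset.mem_sdiff.mp (hgm j a)).2
          simp only [Finset.mem_singleton] at this
          exact this h.symm
      · cases b with
        | none => exact absurd rfl hne
        | some j =>
          intro h
          have := (Finset.mem_sdiff.mp (hgm j a)).2
          simp only [Finset.mem_singleton] at this
          exact this h

lemma choosable_mono {V : Type*} {G : SimpleGraph V} {m m' : ℕ}
    (h : Choosable G m) (hmm : m ≤ m') : Choosable G m' :=
  fun L hL => h L (fun v => le_trans hmm (hL v))

end Helpers

section Main

open Function

lemma not_choosable_small {n s : ℕ} (hn : 2 ≤ n) :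
    ¬ Choosable ((⊤ : SimpleGraph (Fin n)).boxProd (_root_.starGraph s)) (n - 1) := by
  intro h
  obtain ⟨F, hF⟩ := h (fun _ => Finset.range (n - 1)) (fun v => by simp)
  have hinj := column_inj hF none
  have h1 : (Finset.univ.image fun v : Fin n => F (v, none)) ⊆ Finset.range (n - 1) := by
    intro x hx
    obtain ⟨v, -, rfl⟩ := Finset.mem_image.mp hx
    exact hF.1 (v, none)
  have h2 := Finset.card_le_card h1
  rw [Finset.card_image_of_injective _ hinj, Finset.card_univ, Fintype.card_fin,
    Finset.card_range] at h2
  omega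

lemma not_choosable_big {n s : ℕ} (hn : 2 ≤ n) (hs : n.factorial ≤ s) :
    ¬ Choosable ((⊤ : SimpleGraph (Fin n)).boxProd (_root_.starGraph s)) n := by
  classical
  obtain ⟨e⟩ : Nonempty (Equiv.Perm (Fin n) ↪ Fin s) := by
    apply Function.Embedding.nonempty_of_card_le
    rw [Fintype.card_perm, Fintype.card_fin, Fintype.card_fin]
    exact hs
  intro h
  set A : Finset ℕ := Finset.Ico n (2 * n - 1) with hA
  have hAcard : A.card = n - 1 := by rw [hA, Nat.card_Ico]; omega
  set L : Fin n × Option (Fin s) → Finset ℕ := fun p =>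
    Option.rec (Finset.range n)
      (fun j => if hj : ∃ σ : Equiv.Perm (Fin n), e σ = j then
        insert ((hj.choose p.1 : Fin n) : ℕ) A else Finset.range n) p.2 with hLdef
  have hcard : ∀ p, n ≤ (L p).card := by
    rintro ⟨v, _ | j⟩
    · simp [L]
    · show n ≤ (if hj : ∃ σ : Equiv.Perm (Fin n), e σ = j then
        insert ((hj.choose v : Fin n) : ℕ) A else Finset.range n).card
      split_ifs with hj
      · rw [Finset.card_insert_of_notMem, hAcard]
        · omega
        · intro hmem
          rw [hA, Finset.mem_Ico] at hmem
          have := (hj.choose v).isLt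
          omega
      · simp
  obtain ⟨F, hF⟩ := h L hcard
  set f : Fin n → ℕ := fun v => F (v, none) with hf
  have hfi : Function.Injective f := column_inj hF none
  have hflt : ∀ v, f v < n := by
    intro v
    have := hF.1 (v, none)
    simpa [L] using this
  set σfun : Fin n → Fin n := fun v => ⟨f v, hflt v⟩ with hσfun
  have hσi : Function.Injective σfun := fun a b hab =>
    hfi (by simpa [σfun, Fin.ext_iff] using hab)
  set σ : Equiv.Perm (Fin n) := Equiv.ofBijective σfun ((Finite.injective_iff_bijective).mp hσi)
    with hσ
  set j := e σ with hj
  have hex : ∃ τ : Equiv.Perm (Fin n), e τ = j := ⟨σ, rfl⟩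
  have hchoose : hex.choose = σ := e.injective hex.choose_spec
  have hLj : ∀ v : Fin n, L (v, some j) = insert (f v) A := by
    intro v
    have h1 : L (v, some j) = insert ((hex.choose v : Fin n) : ℕ) A := dif_pos hex
    rw [h1, hchoose]
    rfl
  have hmem : ∀ v, F (v, some j) ∈ A := by
    intro v
    have h1 := hF.1 (v, some j)
    rw [hLj v] at h1
    rcases Finset.mem_insert.mp h1 with h | h
    · exfalso
      refine hF.2 (v, some j) (v, none) ?_ (by rw [h])
      apply SimpleGraph.boxProd_adj.mpr
      right
      refine ⟨?_, rfl⟩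
      rw [show _root_.starGraph s = SimpleGraph.fromRel (fun a _ => a = none) from rfl,
        SimpleGraph.fromRel_adj]
      exact ⟨by simp, Or.inr rfl⟩
    · exact h
  have hinj := column_inj hF (some j)
  have hsub : (Finset.univ.image fun v : Fin n => F (v, some j)) ⊆ A := by
    intro x hx
    obtain ⟨v, -, rfl⟩ := Finset.mem_image.mp hx
    exact hmem v
  have h2 := Finset.card_le_card hsub
  rw [Finset.card_image_of_injective _ hinj, Finset.card_univ, Fintype.card_fin, hAcard] at h2
  omega

lemma choosable_small {n s : ℕ} (hn : 2 ≤ n) (hs : s < n.factorial) :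
    Choosable ((⊤ : SimpleGraph (Fin n)).boxProd (_root_.starGraph s)) n := by
  classical
  intro L hL
  set S := (Fintype.piFinset (fun v : Fin n => L (v, none))).filter
    (fun g => Function.Injective g) with hS
  have hScard : n.factorial ≤ S.card := by
    have := count_inj n n le_rfl (fun v => L (v, none)) (fun v => hL (v, none))
    rwa [Nat.descFactorial_self] at this
  set B := S.filter (fun f => ∃ j : Fin s,
    ((Finset.univ.biUnion fun v => L (v, some j) \ {f v})).card < n) with hB
  have hBcard : B.card ≤ s := by
    have hmain := Finset.card_le_card_of_injOn
      (f := fun f : Fin n → ℕ => if h : ∃ j : Fin s,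
          ((Finset.univ.biUnion fun v => L (v, some j) \ {f v})).card < n
        then ((h.choose : Fin s) : ℕ) else 0)
      (s := B) (t := Finset.range s) ?_ ?_
    · simpa using hmain
    · intro f hfB
      obtain ⟨-, hex⟩ := Finset.mem_filter.mp hfB
      dsimp only
      rw [dif_pos hex]
      exact Finset.mem_range.mpr (hex.choose).isLt
    · intro f hfB f' hfB' heq
      obtain ⟨hfS, hex⟩ := Finset.mem_filter.mp (Finset.mem_coe.mp hfB)
      obtain ⟨hfS', hex'⟩ := Finset.mem_filter.mp (Finset.mem_coe.mp hfB')
      dsimp only at heq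
      rw [dif_pos hex, dif_pos hex'] at heq
      have hjj : hex'.choose = hex.choose := Fin.ext heq.symm
      have hb1 := hex.choose_spec
      have hb2 := hex'.choose_spec
      rw [hjj] at hb2
      exact bad_unique hn (fun v => L (v, some hex.choose))
        (fun v => hL (v, some hex.choose)) f f'
        (Finset.mem_filter.mp hfS).2 (Finset.mem_filter.mp hfS').2 hb1 hb2
  have hne : (S \ B).Nonempty := by
    rw [← Finset.card_pos]
    have h1 := Finset.le_card_sdiff B S
    omega
  obtain ⟨f, hfmem⟩ := hne
  rw [Finset.mem_sdiff] at hfmem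
  obtain ⟨hfS, hfnB⟩ := hfmem
  have hfS' := Finset.mem_filter.mp hfS
  have hfpi := Fintype.mem_piFinset.mp hfS'.1
  have hgood : ∀ j : Fin s,
      n ≤ ((Finset.univ.biUnion fun v => L (v, some j) \ {f v})).card := by
    intro j
    by_contra hlt
    push_neg at hlt
    exact hfnB (Finset.mem_filter.mpr ⟨hfS, ⟨j, hlt⟩⟩)
  exact colorable_of_good hn L hL f hfS'.2 hfpi hgood

lemma choosable_big {n s : ℕ} (hn : 2 ≤ n) :
    Choosable ((⊤ : SimpleGraph (Fin n)).boxProd (_root_.starGraph s)) (n + 1) := by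
  intro L hL
  have hv0 : (0 : ℕ) < n := by omega
  set v0 : Fin n := ⟨0, hv0⟩ with hv0def
  have hcenter : n ≤ (Finset.univ.biUnion fun v : Fin n => L (v, none)).card := by
    calc n ≤ (L (v0, none)).card := by have := hL (v0, none); omega
      _ ≤ _ := Finset.card_le_card
          (Finset.subset_biUnion_of_mem (fun v => L (v, none)) (Finset.mem_univ v0))
  obtain ⟨f, hfi, hfm⟩ := hall_wrap (n := n) (by omega) (fun v => L (v, none))
    (fun v => by have := hL (v, none); omega) hcenter
  apply colorable_of_good hn L (fun v => by have := hL v; omega) f hfi hfm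
  intro j
  calc n ≤ (L (v0, some j) \ {f v0}).card := by
        have h1 := Finset.le_card_sdiff ({f v0} : Finset ℕ) (L (v0, some j))
        have h2 := hL (v0, some j)
        simp only [Finset.card_singleton] at *
        omega
    _ ≤ _ := Finset.card_le_card
        (Finset.subset_biUnion_of_mem (fun v => L (v, some j) \ {f v}) (Finset.mem_univ v0))

end Main

/-- `χ_ℓ(K_n □ K_{1,s})` transitions from `n` to `n+1` at `s = n!`. -/
theorem stmt_16 (n s : ℕ) (hn : 2 ≤ n) :
    (s < Nat.factorial n →
      listChromaticNumber ((⊤ : SimpleGraph (Fin n)).boxProd (_root_.starGraph s)) = n) ∧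
    (Nat.factorial n ≤ s →
      listChromaticNumber ((⊤ : SimpleGraph (Fin n)).boxProd (_root_.starGraph s)) = n + 1) := by
  set G := (⊤ : SimpleGraph (Fin n)).boxProd (_root_.starGraph s) with hG
  constructor
  · intro hs
    have hmem : n ∈ {m : ℕ | Choosable G m} := by
      rw [Set.mem_setOf_eq]
      exact choosable_small hn hs
    show sInf {m : ℕ | Choosable G m} = n
    apply le_antisymm
    · exact Nat.sInf_le hmem
    · apply le_csInf ⟨n, hmem⟩
      intro m hm
      rw [Set.mem_setOf_eq] at hm
      by_contra hlt
      push_neg at hlt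
      exact not_choosable_small hn (choosable_mono hm (by omega))
  · intro hs
    have hmem : n + 1 ∈ {m : ℕ | Choosable G m} := by
      rw [Set.mem_setOf_eq]
      exact choosable_big hn
    show sInf {m : ℕ | Choosable G m} = n + 1
    apply le_antisymm
    · exact Nat.sInf_le hmem
    · apply le_csInf ⟨n + 1, hmem⟩
      intro m hm
      rw [Set.mem_setOf_eq] at hm
      by_contra hlt
      push_neg at hlt
      exact not_choosable_big hn hs (choosable_mono hm (by omega))
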